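/- Let d ≥ 0 and let (a₀,a₁,a₂) ∈ H_{d+1}³ satisfy the Euler relation a₀z₀ + a₁z₁ + a₂z₂ = 0. If both dehomogenizations a₀(x,y,1) and a₁(x,y,1) vanish to order at least d+1 at the origin (i.e., the foliation has a singularity of the maximal possible order d+1 at p = [0:0:1]), then a₂ = 0 and there exists a homogeneous polynomial f ∈ ℂ[x,y] of degree d such that a₀(x,y,1) = y·f and a₁(x,y,1) = −x·f. In particular a singularity of order d+1 of a degree-d foliation is automatically dicritical. -/

import Mathlib

open MvPolynomial

/-- Dehomogenization `p(z₀,z₁,z₂) ↦ p(x,y,1)` as an algebra map. -/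
noncomputable def dehom : MvPolynomial (Fin 3) ℂ →ₐ[ℂ] MvPolynomial (Fin 2) ℂ :=
  aeval ![X 0, X 1, 1]

namespace DicriticalAux

lemma isHomogeneous_iff_degree {σ : Type*} {p : MvPolynomial σ ℂ} {n : ℕ} :
    p.IsHomogeneous n ↔ ∀ d : σ →₀ ℕ, coeff d p ≠ 0 → d.degree = n := by
  constructor
  · intro h d hd
    have := h hd
    rwa [show (Finsupp.weight 1 : (σ →₀ ℕ) →+ ℕ) = Finsupp.weight (fun _ => 1) from rfl,
      ← Finsupp.degree_eq_weight_one] at this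
  · intro h d hd
    rw [show (Finsupp.weight 1 : (σ →₀ ℕ) →+ ℕ) = Finsupp.weight (fun _ => 1) from rfl,
      ← Finsupp.degree_eq_weight_one]
    exact h d hd

lemma totalDegree_dehom_le (p : MvPolynomial (Fin 3) ℂ) :
    (dehom p).totalDegree ≤ p.totalDegree := by
  show (aeval ![X 0, X 1, 1] p).totalDegree ≤ _
  rw [aeval_def, eval₂_eq]
  refine totalDegree_finsetSum_le fun d hd => ?_
  refine (totalDegree_mul _ _).trans ?_
  have h1 : ((algebraMap ℂ (MvPolynomial (Fin 2) ℂ)) (coeff d p)).totalDegree = 0 := by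
    rw [MvPolynomial.algebraMap_eq]; exact totalDegree_C _
  rw [h1, zero_add]
  refine (totalDegree_finset_prod _ _).trans ?_
  refine le_trans ?_ (le_totalDegree hd)
  have hsum : (d.sum fun _ e => e) = ∑ i ∈ d.support, d i := rfl
  rw [hsum]
  refine Finset.sum_le_sum fun i hi => ?_
  refine (totalDegree_pow _ _).trans ?_
  have hg : (![X 0, X 1, (1 : MvPolynomial (Fin 2) ℂ)] i).totalDegree ≤ 1 := by
    fin_cases i <;> simp [totalDegree_X, totalDegree_one]
  calc d i * (![X 0, X 1, (1 : MvPolynomial (Fin 2) ℂ)] i).totalDegree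
      ≤ d i * 1 := Nat.mul_le_mul_left _ hg
    _ = d i := Nat.mul_one _

lemma eval_smul_of_isHomogeneous {n : ℕ} {p : MvPolynomial (Fin 3) ℂ} (h : p.IsHomogeneous n)
    (t : ℂ) (r : Fin 3 → ℂ) : eval (t • r) p = t ^ n * eval r p := by
  rw [eval_eq, eval_eq, Finset.mul_sum]
  refine Finset.sum_congr rfl fun d hd => ?_
  have hdeg : ∑ i ∈ d.support, d i = n := by
    have := isHomogeneous_iff_degree.mp h d (mem_support_iff.mp hd)
    simpa [Finsupp.degree_apply] using this
  calc coeff d p * ∏ i ∈ d.support, (t • r) i ^ d i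
      = coeff d p * ∏ i ∈ d.support, (t ^ d i * r i ^ d i) := by
        simp [Pi.smul_apply, smul_eq_mul, mul_pow]
    _ = coeff d p * ((∏ i ∈ d.support, t ^ d i) * ∏ i ∈ d.support, r i ^ d i) := by
        rw [Finset.prod_mul_distrib]
    _ = t ^ n * (coeff d p * ∏ i ∈ d.support, r i ^ d i) := by
        rw [Finset.prod_pow_eq_pow_sum, hdeg]; ring

lemma aeval_eq_eval' {k : ℕ} (v : Fin k → ℂ) (q : MvPolynomial (Fin k) ℂ) :
    aeval v q = eval v q := by
  rw [← coe_aeval_eq_eval]; rfl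

lemma eval_dehom (v : Fin 2 → ℂ) (p : MvPolynomial (Fin 3) ℂ) :
    eval v (dehom p) = eval ![v 0, v 1, 1] p := by
  rw [← aeval_eq_eval' v, ← aeval_eq_eval' ![v 0, v 1, 1]]
  have hcomp : (aeval v : MvPolynomial (Fin 2) ℂ →ₐ[ℂ] ℂ).comp dehom
      = aeval ![v 0, v 1, 1] := by
    rw [show dehom = aeval ![X 0, X 1, 1] from rfl, comp_aeval]
    congr 1
    funext i
    fin_cases i <;> simp
  calc aeval v (dehom p)
      = ((aeval v : MvPolynomial (Fin 2) ℂ →ₐ[ℂ] ℂ).comp dehom) p := rfl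
    _ = aeval ![v 0, v 1, 1] p := by rw [hcomp]

lemma homog_of_components (p : MvPolynomial (Fin 2) ℂ) (m : ℕ) (hdeg : p.totalDegree ≤ m)
    (h : ∀ n < m, homogeneousComponent n p = 0) : p.IsHomogeneous m := by
  rw [isHomogeneous_iff_degree]
  intro d hd
  have hle : d.degree ≤ m := by
    refine le_trans ?_ hdeg
    exact le_totalDegree (mem_support_iff.mpr hd)
  rcases lt_or_eq_of_le hle with hlt | he
  · exfalso
    have hzero := h d.degree hlt
    have hc := coeff_homogeneousComponent (σ := Fin 2) (R := ℂ) d.degree p d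
    rw [if_pos rfl] at hc
    rw [hzero, coeff_zero] at hc
    exact hd hc.symm
  · exact he

lemma dehom_X0 : dehom (X 0) = (X 0 : MvPolynomial (Fin 2) ℂ) := by
  show aeval ![X 0, X 1, 1] (X 0) = _; simp

lemma dehom_X1 : dehom (X 1) = (X 1 : MvPolynomial (Fin 2) ℂ) := by
  show aeval ![X 0, X 1, 1] (X 1) = _; simp

lemma dehom_X2 : dehom (X 2) = (1 : MvPolynomial (Fin 2) ℂ) := by
  show aeval ![X 0, X 1, 1] (X 2) = _; simp

end DicriticalAux

open DicriticalAux in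
/-- A singularity of the maximal order `d+1` of a degree-`d` foliation is
automatically dicritical: if `(a₀,a₁,a₂)` are homogeneous of degree `d+1`
with `a₀z₀ + a₁z₁ + a₂z₂ = 0` and both `a₀(x,y,1)`, `a₁(x,y,1)` vanish to
order at least `d+1` at the origin, then `a₂ = 0` and
`a₀(x,y,1) = y·f`, `a₁(x,y,1) = −x·f` for some homogeneous `f` of degree `d`. -/
theorem maximal_order_singularity_dicritical (d : ℕ)
    (a : Fin 3 → MvPolynomial (Fin 3) ℂ)
    (hhom : ∀ i, (a i).IsHomogeneous (d + 1))
    (heuler : ∑ i : Fin 3, a i * X i = 0)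
    (h0 : ∀ n < d + 1, homogeneousComponent n (dehom (a 0)) = 0)
    (h1 : ∀ n < d + 1, homogeneousComponent n (dehom (a 1)) = 0) :
    a 2 = 0 ∧ ∃ f : MvPolynomial (Fin 2) ℂ, f.IsHomogeneous d ∧
      dehom (a 0) = X 1 * f ∧ dehom (a 1) = -(X 0 * f) := by
  -- dehomogenized Euler relation
  have heuler' : dehom (a 0) * X 0 + dehom (a 1) * X 1 + dehom (a 2) = 0 := by
    have h := congrArg dehom heuler
    rw [map_sum, Fin.sum_univ_three] at h
    simp only [map_mul, dehom_X0, dehom_X1, dehom_X2, mul_one, map_zero] at h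
    exact h
  -- homogeneity of the dehomogenizations of a0, a1
  have hA0 : (dehom (a 0)).IsHomogeneous (d + 1) :=
    homog_of_components _ _ ((totalDegree_dehom_le _).trans (hhom 0).totalDegree_le) h0
  have hA1 : (dehom (a 1)).IsHomogeneous (d + 1) :=
    homog_of_components _ _ ((totalDegree_dehom_le _).trans (hhom 1).totalDegree_le) h1
  -- the top-degree part vanishes
  have hB : (dehom (a 0) * X 0 + dehom (a 1) * X 1).IsHomogeneous (d + 1 + 1) :=
    (hA0.mul (isHomogeneous_X _ _)).add (hA1.mul (isHomogeneous_X _ _))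
  have hA2deg : (dehom (a 2)).totalDegree ≤ d + 1 :=
    (totalDegree_dehom_le _).trans (hhom 2).totalDegree_le
  have hBzero : dehom (a 0) * X 0 + dehom (a 1) * X 1 = 0 := by
    by_contra hne
    have htd := hB.totalDegree hne
    have hEq : dehom (a 0) * X 0 + dehom (a 1) * X 1 = -dehom (a 2) :=
      eq_neg_of_add_eq_zero_left heuler'
    rw [hEq, totalDegree_neg] at htd
    omega
  have hA2 : dehom (a 2) = 0 := by
    have := heuler'
    rw [hBzero, zero_add] at this
    exact this
  -- a 2 = 0
  have ha2 : a 2 = 0 := by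
    have hmul : (a 2 * X 2).IsHomogeneous (d + 1 + 1) := (hhom 2).mul (isHomogeneous_X _ _)
    have hz : a 2 * X 2 = 0 := by
      apply hmul.eq_zero_of_forall_eval_eq_zero
      intro r
      rw [map_mul, eval_X]
      by_cases hr : r 2 = 0
      · rw [hr, mul_zero]
      · have hrs : r = r 2 • ![r 0 / r 2, r 1 / r 2, (1 : ℂ)] := by
          funext i
          fin_cases i <;> simp [Pi.smul_apply, smul_eq_mul] <;> field_simp
        have hz2 : eval r (a 2) = 0 := by
          conv_lhs => rw [hrs]
          rw [eval_smul_of_isHomogeneous (hhom 2)]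
          have hd2 := eval_dehom ![r 0 / r 2, r 1 / r 2] (a 2)
          rw [hA2, map_zero] at hd2
          have hveq : ![(![r 0 / r 2, r 1 / r 2] : Fin 2 → ℂ) 0,
              (![r 0 / r 2, r 1 / r 2] : Fin 2 → ℂ) 1, (1 : ℂ)]
              = ![r 0 / r 2, r 1 / r 2, (1 : ℂ)] := by
            funext i; fin_cases i <;> simp
          rw [hveq] at hd2
          rw [← hd2, mul_zero]
        rw [hz2, zero_mul]
    exact (mul_eq_zero.mp hz).resolve_right (X_ne_zero _)
  -- divisibility : X 1 divides dehom (a 0)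
  have hsupp : ∀ d' ∈ (dehom (a 0)).support, d' 1 ≠ 0 := by
    intro d' hd' hzero
    classical
    have hc1 : coeff (d' + Finsupp.single 0 1) (dehom (a 0) * X 0) = coeff d' (dehom (a 0)) :=
      coeff_mul_X _ _ _
    have hc2 : coeff (d' + Finsupp.single 0 1) (dehom (a 1) * X 1) = 0 := by
      rw [coeff_mul_X']
      rw [if_neg]
      simp [Finsupp.mem_support_iff, Finsupp.add_apply, Finsupp.single_apply, hzero]
    have hcc := congrArg (coeff (d' + Finsupp.single 0 1)) hBzero
    rw [coeff_add, hc1, hc2, add_zero, coeff_zero] at hcc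
    exact (mem_support_iff.mp hd') hcc
  have hdvd : (X 1 : MvPolynomial (Fin 2) ℂ) ∣ dehom (a 0) := by
    rw [show dehom (a 0) = ∑ v ∈ (dehom (a 0)).support, monomial v (coeff v (dehom (a 0))) from
      (dehom (a 0)).as_sum]
    exact Finset.dvd_sum fun d' hd' => X_dvd_monomial.mpr (Or.inr (hsupp d' hd'))
  obtain ⟨f, hf⟩ := hdvd
  -- relation for dehom (a 1)
  have hA1f : dehom (a 1) = -(X 0 * f) := by
    have h2 : (X 1 : MvPolynomial (Fin 2) ℂ) * (X 0 * f + dehom (a 1)) = 0 := by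
      rw [hf] at hBzero
      linear_combination hBzero
    have h3 := (mul_eq_zero.mp h2).resolve_left (X_ne_zero _)
    linear_combination h3
  -- homogeneity of f
  have hfhom : f.IsHomogeneous d := by
    rw [isHomogeneous_iff_degree]
    intro d' hd'
    have hc : coeff (Finsupp.single 1 1 + d') (X 1 * f) = coeff d' f := coeff_X_mul _ _ _
    have hco : coeff (Finsupp.single 1 1 + d') (dehom (a 0)) ≠ 0 := by
      rw [hf, hc]; exact hd'
    have hdeg := isHomogeneous_iff_degree.mp hA0 _ hco
    have hadd : (Finsupp.single (1 : Fin 2) 1 + d').degree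
        = (Finsupp.single (1 : Fin 2) 1).degree + d'.degree := by
      simp only [Finsupp.degree_eq_weight_one, map_add]
    have hone : (Finsupp.single (1 : Fin 2) 1).degree = 1 := by
      exact Finsupp.degree_single _ _
    rw [hadd, hone] at hdeg
    omega
  exact ⟨ha2, f, hfhom, hf, hA1f⟩
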